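/- If H is a nonempty closed subset of the trace-zero hyperplane {A ∈ Sym²(ℝⁿ) : tr A = 0}, then H + P is closed (hence a subequation), H − P is closed, and H = (H + P) ∩ (H − P). -/

import Mathlib

open Topology Pointwise

abbrev SymMat (n : ℕ) : Type := selfAdjoint (Matrix (Fin n) (Fin n) ℝ)

def PSD (n : ℕ) : Set (SymMat n) := {A | (A : Matrix (Fin n) (Fin n) ℝ).PosSemidef}

def dual {n : ℕ} (F : Set (SymMat n)) : Set (SymMat n) := {A | -A ∉ interior F}

namespace Stmt18Aux

variable {n : ℕ}

lemma psd_diag_nonneg {Q : Matrix (Fin n) (Fin n) ℝ} (hQ : Q.PosSemidef) (i : Fin n) :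
    0 ≤ Q i i := by
  have := hQ.dotProduct_mulVec_nonneg (Pi.single i 1)
  simpa [dotProduct, Matrix.mulVec, Pi.single_apply, Finset.sum_ite_eq, mul_ite] using this

lemma psd_trace_nonneg {Q : Matrix (Fin n) (Fin n) ℝ} (hQ : Q.PosSemidef) : 0 ≤ Q.trace :=
  Finset.sum_nonneg fun i _ => psd_diag_nonneg hQ i

lemma psd_diag_le_trace {Q : Matrix (Fin n) (Fin n) ℝ} (hQ : Q.PosSemidef) (i : Fin n) :
    Q i i ≤ Q.trace :=
  Finset.single_le_sum (fun k _ => psd_diag_nonneg hQ k) (Finset.mem_univ i)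

lemma psd_abs_le_trace {Q : Matrix (Fin n) (Fin n) ℝ} (hQ : Q.PosSemidef) (i j : Fin n) :
    |Q i j| ≤ Q.trace := by
  rcases eq_or_ne i j with rfl | hij
  · rw [abs_of_nonneg (psd_diag_nonneg hQ i)]; exact psd_diag_le_trace hQ i
  · have hsym : Q j i = Q i j := by simpa using hQ.1.apply i j
    have key : ∀ c : ℝ, 0 ≤ Q i i + c * Q i j + c * Q j i + c * c * Q j j := by
      intro c
      have h := hQ.dotProduct_mulVec_nonneg (Pi.single i 1 + Pi.single j c)
      rw [star_trivial, Matrix.mulVec_add, dotProduct_add, add_dotProduct,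
        add_dotProduct, Matrix.mulVec_single, Matrix.mulVec_single] at h
      simp only [single_dotProduct, Pi.smul_apply, op_smul_eq_mul, Matrix.col_apply, mul_one] at h
      calc (0:ℝ) ≤ _ := h
        _ = Q i i + c * Q i j + c * Q j i + c * c * Q j j := by ring
    have h1 := key 1
    have h2 := key (-1)
    have hpair : Q i i + Q j j ≤ Q.trace := by
      have := Finset.sum_le_sum_of_subset_of_nonneg (Finset.subset_univ ({i, j} : Finset (Fin n)))
        (fun k _ _ => psd_diag_nonneg hQ k)
      rwa [Finset.sum_pair hij] at this
    rw [abs_le]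
    constructor <;> nlinarith [h1, h2, hsym]

lemma psd_eq_zero_of_trace_eq_zero {Q : Matrix (Fin n) (Fin n) ℝ} (hQ : Q.PosSemidef)
    (h : Q.trace = 0) : Q = 0 := by
  ext i j
  have := psd_abs_le_trace hQ i j
  rw [h] at this
  simpa using le_antisymm this (abs_nonneg _)

instance instFCT (n : ℕ) : FirstCountableTopology (Matrix (Fin n) (Fin n) ℝ) :=
  inferInstanceAs (FirstCountableTopology (Fin n → Fin n → ℝ))

instance instFCT2 (n : ℕ) : FirstCountableTopology (SymMat n) :=
  Topology.IsInducing.subtypeVal.firstCountableTopology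

lemma isClosed_psd_matrix : IsClosed {M : Matrix (Fin n) (Fin n) ℝ | M.PosSemidef} := by
  have heq : {M : Matrix (Fin n) (Fin n) ℝ | M.PosSemidef}
      = {M : Matrix (Fin n) (Fin n) ℝ | M.conjTranspose = M} ∩
        ⋂ x : Fin n → ℝ, {M : Matrix (Fin n) (Fin n) ℝ | 0 ≤ dotProduct (star x) (Matrix.mulVec M x)} := by
    ext M
    simp only [Set.mem_setOf_eq, Set.mem_inter_iff, Set.mem_iInter]
    exact Matrix.posSemidef_iff_dotProduct_mulVec
  rw [heq]
  refine (isClosed_eq (continuous_id.matrix_conjTranspose) continuous_id).inter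
    (isClosed_iInter fun x => isClosed_le continuous_const ?_)
  exact continuous_const.dotProduct (continuous_id.matrix_mulVec continuous_const)

lemma isCompact_matrix_slice (c : ℝ) :
    IsCompact {M : Matrix (Fin n) (Fin n) ℝ | M.PosSemidef ∧ M.trace ≤ c} := by
  have hbox : IsCompact {M : Matrix (Fin n) (Fin n) ℝ | ∀ i j, M i j ∈ Set.Icc (-c) c} := by
    have h1 : IsCompact (Set.pi Set.univ fun _ : Fin n =>
        (Set.pi Set.univ fun _ : Fin n => Set.Icc (-c) c)) :=
      isCompact_univ_pi fun _ => isCompact_univ_pi fun _ => isCompact_Icc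
    have heq : {M : Matrix (Fin n) (Fin n) ℝ | ∀ i j, M i j ∈ Set.Icc (-c) c}
        = (Set.pi Set.univ fun _ : Fin n => (Set.pi Set.univ fun _ : Fin n => Set.Icc (-c) c)) := by
      ext M
      constructor
      · intro h i _ j _; exact h i j
      · intro h i j; exact h i (Set.mem_univ i) j (Set.mem_univ j)
    rw [heq]; exact h1
  refine hbox.of_isClosed_subset (isClosed_psd_matrix.inter
    (isClosed_le (continuous_id.matrix_trace) continuous_const)) ?_
  rintro M ⟨hM, htr⟩ 
  intro i j
  have := psd_abs_le_trace hM i j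
  have habs : |M i j| ≤ c := this.trans htr
  exact abs_le.mp habs

lemma isCompact_slice (c : ℝ) :
    IsCompact {Q : SymMat n | Q ∈ PSD n ∧ Matrix.trace (Q : Matrix (Fin n) (Fin n) ℝ) ≤ c} := by
  rw [Subtype.isCompact_iff]
  have : (Subtype.val '' {Q : SymMat n | Q ∈ PSD n ∧ Matrix.trace (Q : Matrix (Fin n) (Fin n) ℝ) ≤ c})
      = {M : Matrix (Fin n) (Fin n) ℝ | M.PosSemidef ∧ M.trace ≤ c} := by
    ext M
    constructor
    · rintro ⟨Q, ⟨hQ1, hQ2⟩, rfl⟩; exact ⟨hQ1, hQ2⟩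
    · rintro ⟨h1, h2⟩
      exact ⟨⟨M, h1.1⟩, ⟨h1, h2⟩, rfl⟩
  rw [this]
  exact isCompact_matrix_slice c

lemma trace_cont : Continuous (fun A : SymMat n => Matrix.trace (A : Matrix (Fin n) (Fin n) ℝ)) :=
  continuous_subtype_val.matrix_trace

lemma closed_add (H : Set (SymMat n)) (hcl : IsClosed H)
    (htr : ∀ A ∈ H, Matrix.trace (A : Matrix (Fin n) (Fin n) ℝ) = 0) :
    IsClosed (H + PSD n) := by
  refine isClosed_of_closure_subset ?_
  intro x hx
  obtain ⟨u, hu, hlim⟩ := mem_closure_iff_seq_limit.mp hx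
  have hex : ∀ k, ∃ a ∈ H, ∃ p ∈ PSD n, a + p = u k := fun k => Set.mem_add.mp (hu k)
  choose a ha p hp hap using hex
  set T : SymMat n → ℝ := fun A => Matrix.trace (A : Matrix (Fin n) (Fin n) ℝ) with hT
  have hTp : ∀ k, T (p k) = T (u k) := by
    intro k
    have h0 : T (a k) + T (p k) = T (u k) := by
      rw [← hap k]; simp [hT, Matrix.trace_add]
    have h1 : T (a k) = 0 := htr (a k) (ha k)
    linarith
  have hTlim : Filter.Tendsto (fun k => T (p k)) Filter.atTop (𝓝 (T x)) := by
    have h1 : Filter.Tendsto (fun k => T (u k)) Filter.atTop (𝓝 (T x)) :=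
      (trace_cont.tendsto x).comp hlim
    have h2 : (fun k => T (p k)) = fun k => T (u k) := funext hTp
    rw [h2]; exact h1
  have hev : ∀ᶠ k in Filter.atTop, p k ∈
      {Q : SymMat n | Q ∈ PSD n ∧ T Q ≤ T x + 1} := by
    filter_upwards [hTlim.eventually (eventually_le_nhds (lt_add_one (T x)))] with k hk
    exact ⟨hp k, hk⟩
  obtain ⟨q, hq, φ, hφ, hqlim⟩ := (isCompact_slice (T x + 1)).tendsto_subseq' hev.frequently
  have halim : Filter.Tendsto (fun k => a (φ k)) Filter.atTop (𝓝 (x - q)) := by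
    have h1 : Filter.Tendsto (fun k => u (φ k)) Filter.atTop (𝓝 x) :=
      hlim.comp hφ.tendsto_atTop
    have h2 : Filter.Tendsto (fun k => u (φ k) - p (φ k)) Filter.atTop (𝓝 (x - q)) :=
      h1.sub hqlim
    have : (fun k => u (φ k) - p (φ k)) = fun k => a (φ k) := by
      funext k
      rw [← hap (φ k)]
      abel
    rwa [this] at h2
  have hxq : x - q ∈ H := hcl.mem_of_tendsto halim (Filter.Eventually.of_forall fun k => ha (φ k))
  exact Set.mem_add.mpr ⟨x - q, hxq, q, hq.1, by abel⟩

end Stmt18Aux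

open Stmt18Aux in
theorem stmt18 (n : ℕ) (H : Set (SymMat n)) (hne : H.Nonempty) (hcl : IsClosed H)
    (htr : ∀ A ∈ H, Matrix.trace (A : Matrix (Fin n) (Fin n) ℝ) = 0) :
    IsClosed (H + PSD n) ∧ IsClosed (H - PSD n) ∧ H = (H + PSD n) ∩ (H - PSD n) := by
  have hzero : (0 : SymMat n) ∈ PSD n := by
    show Matrix.PosSemidef _
    simpa using (Matrix.PosSemidef.zero (n := Fin n) (R := ℝ))
  have hsub_eq : H - PSD n = -((-H) + PSD n) := by
    ext A
    simp only [Set.mem_neg, Set.mem_sub, Set.mem_add]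
    constructor
    · rintro ⟨b, hb, q, hq, rfl⟩
      exact ⟨-b, by simpa using hb, q, hq, by abel⟩
    · rintro ⟨b, hb, q, hq, hbq⟩
      have hA : -(b + q) = A := by rw [hbq, neg_neg]
      exact ⟨-b, by simpa using hb, q, hq, by rw [← hA]; abel⟩
  have hnegH : ∀ A ∈ (-H : Set (SymMat n)), Matrix.trace (A : Matrix (Fin n) (Fin n) ℝ) = 0 := by
    intro A hA
    have := htr (-A) (Set.mem_neg.mp hA)
    simp only [AddSubgroup.coe_neg, Matrix.trace_neg] at this
    linarith
  have h1 : IsClosed (H + PSD n) := closed_add H hcl htr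
  have h2 : IsClosed (H - PSD n) := by
    rw [hsub_eq]
    exact (closed_add (-H) hcl.neg hnegH).neg
  refine ⟨h1, h2, ?_⟩
  apply Set.Subset.antisymm
  · intro A hA
    exact ⟨Set.mem_add.mpr ⟨A, hA, 0, hzero, add_zero A⟩,
      Set.mem_sub.mpr ⟨A, hA, 0, hzero, sub_zero A⟩⟩
  · rintro A ⟨hA1, hA2⟩
    obtain ⟨b, hb, q, hq, hbq⟩ := Set.mem_add.mp hA1
    obtain ⟨c, hc, r, hr, hcr⟩ := Set.mem_sub.mp hA2
    have htrq : Matrix.trace (q : Matrix (Fin n) (Fin n) ℝ) = 0 := by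
      have e1 : Matrix.trace ((A : SymMat n) : Matrix (Fin n) (Fin n) ℝ)
          = Matrix.trace (q : Matrix (Fin n) (Fin n) ℝ) := by
        rw [← hbq]
        simp [Matrix.trace_add, htr b hb]
      have e2 : Matrix.trace ((A : SymMat n) : Matrix (Fin n) (Fin n) ℝ)
          = -Matrix.trace (r : Matrix (Fin n) (Fin n) ℝ) := by
        rw [← hcr]
        simp [Matrix.trace_sub, htr c hc]
      have hqn := psd_trace_nonneg hq
      have hrn := psd_trace_nonneg hr
      linarith [e1 ▸ e2]
    have hq0 : q = 0 := by
      have := psd_eq_zero_of_trace_eq_zero hq htrq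
      exact Subtype.ext (by simpa using this)
    rw [← hbq, hq0, add_zero]
    exact hb
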